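/- Let E and S be countable sets, let X = [0,∞)^E and Y = {0,1}^S carry their product topologies, and let (μ_k) and μ be Borel probability measures on X × Y such that μ_k converges weakly to μ. Assume that all μ_k have the same marginal P on X, and that for each e ∈ E the distribution of the coordinate projection t_e under P has no atoms (P(t_e = a) = 0 for every a ∈ [0,∞)). Then for every Borel set U ⊆ X and every cylinder set V ⊆ Y (a set determined by the values of finitely many coordinates of Y), μ_k(U × V) → μ(U × V) as k → ∞. -/

import Mathlib

open MeasureTheory Filter
open scoped NNReal

/-- if Borel probability measures `μ_k` on `[0,∞)^E × {0,1}^S` (countable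
`E`, `S`) converge weakly to `μ`, all `μ_k` share the same marginal `P` on `[0,∞)^E`, and
each coordinate of `P` is atomless, then `μ_k(U × V) → μ(U × V)` for every Borel
`U ⊆ [0,∞)^E` and every cylinder set `V ⊆ {0,1}^S`. -/
theorem stmt11 {E S : Type*} [Countable E] [Countable S]
    (μseq : ℕ → Measure ((E → ℝ≥0) × (S → Bool)))
    (μ : Measure ((E → ℝ≥0) × (S → Bool)))
    [∀ k, IsProbabilityMeasure (μseq k)] [IsProbabilityMeasure μ]
    (P : Measure (E → ℝ≥0)) [IsProbabilityMeasure P]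
    (hmarg : ∀ k, (μseq k).map Prod.fst = P)
    (hweak : ∀ f : (E → ℝ≥0) × (S → Bool) → ℝ, Continuous f → (∃ C : ℝ, ∀ p, |f p| ≤ C) →
      Tendsto (fun k => ∫ p, f p ∂(μseq k)) atTop (nhds (∫ p, f p ∂μ)))
    (hatomless : ∀ (e : E) (a : ℝ≥0), P {t : E → ℝ≥0 | t e = a} = 0) :
    ∀ U : Set (E → ℝ≥0), MeasurableSet U →
      ∀ V : Set (S → Bool),
        (∃ F : Finset S, ∀ η η' : S → Bool, (∀ s ∈ F, η s = η' s) → (η ∈ V ↔ η' ∈ V)) →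
        Tendsto (fun k => μseq k (U ×ˢ V)) atTop (nhds (μ (U ×ˢ V))) := by
  classical
  intro U hU V hVcyl
  obtain ⟨F, hF⟩ := hVcyl
  -- V is clopen
  have hVclopen : IsClopen V := by
    have hπ : Continuous (fun η : S → Bool => fun s : F => η s) :=
      continuous_pi fun s => continuous_apply _
    have hVeq : V = (fun η : S → Bool => fun s : F => η s) ⁻¹'
        ((fun η : S → Bool => fun s : F => η s) '' V) := by
      ext η
      constructor
      · intro hη; exact ⟨η, hη, rfl⟩
      · rintro ⟨η', hη', hee⟩
        exact (hF η' η (fun s hs => congrFun hee ⟨s, hs⟩)).mp hη'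
    rw [hVeq]
    exact (isClopen_discrete _).preimage hπ
  have hVmeas : MeasurableSet V := hVclopen.isOpen.measurableSet
  -- indicator of V is continuous
  set χ : (S → Bool) → ℝ := fun y => if y ∈ V then 1 else 0 with hχdef
  have hχcont : Continuous χ := by
    refine continuous_if ?_ continuousOn_const continuousOn_const
    intro a ha
    rw [show {x : S → Bool | x ∈ V} = V from rfl, hVclopen.frontier_eq] at ha
    exact absurd ha (Set.notMem_empty a)
  have hχabs : ∀ y, |χ y| ≤ 1 := by
    intro y
    by_cases hy : y ∈ V <;> simp [hχdef, hy]
  have hmfst : Measurable (Prod.fst : (E → ℝ≥0) × (S → Bool) → (E → ℝ≥0)) := measurable_fst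
  -- the marginal of μ is also P
  have hμmarg : μ.map Prod.fst = P := by
    haveI : IsProbabilityMeasure (μ.map Prod.fst) :=
      Measure.isProbabilityMeasure_map hmfst.aemeasurable
    refine ext_of_forall_lintegral_eq_of_IsFiniteMeasure (fun f => ?_)
    have hfc : Continuous fun x : E → ℝ≥0 => (f x : ℝ) := NNReal.continuous_coe.comp f.continuous
    obtain ⟨Cb, hCb⟩ := f.bounded
    set x0 : E → ℝ≥0 := fun _ => 0 with hx0
    set Cf : ℝ := (f x0 : ℝ) + Cb with hCf
    have habs : ∀ x, |(f x : ℝ)| ≤ Cf := by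
      intro x
      have h1 := hCb x x0
      rw [NNReal.dist_eq] at h1
      have h3 : (0:ℝ) ≤ (f x : ℝ) := (f x).coe_nonneg
      rw [abs_of_nonneg h3, hCf]
      have := abs_le.mp h1
      linarith [this.2]
    have hint : ∀ (ν : Measure (E → ℝ≥0)), IsProbabilityMeasure ν →
        Integrable (fun x => (f x : ℝ)) ν := by
      intro ν hν
      refine (integrable_const Cf).mono' hfc.aestronglyMeasurable
        (Filter.Eventually.of_forall fun x => ?_)
      simpa [Real.norm_eq_abs] using habs x
    have h1 : ∫ x, (f x : ℝ) ∂(μ.map Prod.fst) = ∫ p, (f p.1 : ℝ) ∂μ :=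
      integral_map hmfst.aemeasurable hfc.aestronglyMeasurable
    have h2 : ∀ k, ∫ p, (f p.1 : ℝ) ∂(μseq k) = ∫ x, (f x : ℝ) ∂P := by
      intro k
      rw [← hmarg k, integral_map hmfst.aemeasurable hfc.aestronglyMeasurable]
    have h3 : ∫ p, (f p.1 : ℝ) ∂μ = ∫ x, (f x : ℝ) ∂P := by
      have ht := hweak (fun p => (f p.1 : ℝ)) (hfc.comp continuous_fst)
        ⟨Cf, fun p => habs p.1⟩
      simp_rw [h2] at ht
      exact tendsto_nhds_unique ht tendsto_const_nhds
    rw [lintegral_coe_eq_integral _ (hint _ inferInstance),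
      lintegral_coe_eq_integral _ (hint _ inferInstance), h1, h3]
  -- reduce to real-valued integrals
  have hAmeas : MeasurableSet (U ×ˢ V) := hU.prod hVmeas
  rw [← ENNReal.tendsto_toReal_iff (fun k => measure_ne_top _ _) (measure_ne_top μ _)]
  set h : (E → ℝ≥0) × (S → Bool) → ℝ :=
    fun p => (if p.1 ∈ U then (1 : ℝ) else 0) * χ p.2 with hhdef
  have hind : (U ×ˢ V).indicator (1 : (E → ℝ≥0) × (S → Bool) → ℝ) = h := by
    funext p
    by_cases h1 : p.1 ∈ U <;> by_cases h2 : p.2 ∈ V <;>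
      simp [hhdef, hχdef, Set.indicator_apply, Set.mem_prod, h1, h2]
  have hrepr : ∀ (ν : Measure ((E → ℝ≥0) × (S → Bool))),
      (ν (U ×ˢ V)).toReal = ∫ p, h p ∂ν := by
    intro ν
    show ν.real (U ×ˢ V) = _
    rw [← integral_indicator_one hAmeas, hind]
  simp_rw [hrepr]
  rw [Metric.tendsto_atTop]
  intro ε hε
  set δ : ℝ := ε / 8 with hδdef
  have hδpos : 0 < δ := by positivity
  have hδ0 : ENNReal.ofReal δ ≠ 0 := by
    simp [ENNReal.ofReal_eq_zero, not_le, hδpos]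
  obtain ⟨C, hCU, hCcl, hPC⟩ := hU.exists_isClosed_lt_add (measure_ne_top P U) hδ0
  obtain ⟨O, hUO, hOop, hPO⟩ := U.exists_isOpen_lt_add (measure_ne_top P U) hδ0
  have hdis : Disjoint Oᶜ C := Set.disjoint_left.mpr fun x hx hxC => hx (hUO (hCU hxC))
  obtain ⟨g, hg0, hg1, hg01⟩ :=
    exists_continuous_zero_one_of_isClosed hOop.isClosed_compl hCcl hdis
  have hODmeas : MeasurableSet (O \ C) := hOop.measurableSet.diff hCcl.measurableSet
  set D : (E → ℝ≥0) → ℝ := (O \ C).indicator 1 with hDdef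
  have hkey : ∀ x, |(if x ∈ U then (1 : ℝ) else 0) - g x| ≤ D x := by
    intro x
    by_cases hxC : x ∈ C
    · have hxU : x ∈ U := hCU hxC
      have : g x = 1 := hg1 hxC
      have hD : 0 ≤ D x := Set.indicator_nonneg (fun _ _ => zero_le_one) x
      simp [hxU, this, hD]
    · by_cases hxO : x ∈ O
      · have hmem : x ∈ O \ C := ⟨hxO, hxC⟩
        have hD : D x = 1 := by simp [hDdef, Set.indicator_of_mem hmem]
        rw [hD]
        obtain ⟨hg0x, hg1x⟩ := hg01 x
        by_cases hxU : x ∈ U <;> simp only [hxU, if_true, if_false] <;>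
          rw [abs_le] <;> constructor <;> linarith
      · have hxU : x ∉ U := fun hx => hxO (hUO hx)
        have : g x = 0 := hg0 hxO
        have hD : 0 ≤ D x := Set.indicator_nonneg (fun _ _ => zero_le_one) x
        simp [hxU, this, hD]
  -- measure of O \ C is small
  have hPOC : (P (O \ C)).toReal < 2 * δ := by
    have hPCO : P C ≤ P O := measure_mono (hCU.trans hUO)
    have hdiff : P (O \ C) = P O - P C :=
      measure_diff (hCU.trans hUO) hCcl.measurableSet.nullMeasurableSet (measure_ne_top P C)
    have e1 : (P O).toReal < (P U).toReal + δ := by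
      have := ENNReal.toReal_lt_toReal (measure_ne_top P O)
        (by finiteness : P U + ENNReal.ofReal δ ≠ ⊤) |>.mpr hPO
      rwa [ENNReal.toReal_add (measure_ne_top P U) ENNReal.ofReal_ne_top,
        ENNReal.toReal_ofReal hδpos.le] at this
    have e2 : (P U).toReal < (P C).toReal + δ := by
      have := ENNReal.toReal_lt_toReal (measure_ne_top P U)
        (by finiteness : P C + ENNReal.ofReal δ ≠ ⊤) |>.mpr hPC
      rwa [ENNReal.toReal_add (measure_ne_top P C) ENNReal.ofReal_ne_top,
        ENNReal.toReal_ofReal hδpos.le] at this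
    have e3 : (P (O \ C)).toReal = (P O).toReal - (P C).toReal := by
      rw [hdiff, ENNReal.toReal_sub_of_le hPCO (measure_ne_top P O)]
    linarith
  -- the continuous approximation
  set ψ : (E → ℝ≥0) × (S → Bool) → ℝ := fun p => g p.1 * χ p.2 with hψdef
  have hψc : Continuous ψ := (g.continuous.comp continuous_fst).mul (hχcont.comp continuous_snd)
  have hψb : ∀ p, |ψ p| ≤ 1 := by
    intro p
    rw [hψdef, abs_mul]
    have h1 : |g p.1| ≤ 1 := by
      obtain ⟨h0, h1⟩ := hg01 p.1
      rw [abs_le]; constructor <;> linarith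
    calc |g p.1| * |χ p.2| ≤ 1 * 1 :=
          mul_le_mul h1 (hχabs p.2) (abs_nonneg _) zero_le_one
      _ = 1 := mul_one 1
  -- key integral bound for any measure with marginal P
  have hbound : ∀ (ν : Measure ((E → ℝ≥0) × (S → Bool))), IsProbabilityMeasure ν →
      ν.map Prod.fst = P →
      |∫ p, h p ∂ν - ∫ p, ψ p ∂ν| ≤ (P (O \ C)).toReal := by
    intro ν hν hνm
    haveI := hν
    have hDmeas : Measurable D := (measurable_const.indicator hODmeas)
    have hinth : Integrable h ν := by
      rw [← hind]
      exact (integrable_const (1 : ℝ)).indicator hAmeas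
    have hintψ : Integrable ψ ν := by
      refine (integrable_const (1 : ℝ)).mono' hψc.aestronglyMeasurable
        (Filter.Eventually.of_forall fun p => ?_)
      simpa [Real.norm_eq_abs] using hψb p
    have hintD : Integrable (fun p : (E → ℝ≥0) × (S → Bool) => D p.1) ν := by
      have : (fun p : (E → ℝ≥0) × (S → Bool) => D p.1)
          = (Prod.fst ⁻¹' (O \ C)).indicator (fun _ => (1 : ℝ)) := by
        funext p
        simp only [hDdef, Set.indicator_apply, Set.mem_preimage, Pi.one_apply]
      rw [this]
      exact (integrable_const (1 : ℝ)).indicator (hODmeas.preimage hmfst)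
    have hptwise : ∀ p, |h p - ψ p| ≤ D p.1 := by
      intro p
      have : h p - ψ p = ((if p.1 ∈ U then (1 : ℝ) else 0) - g p.1) * χ p.2 := by
        rw [hhdef, hψdef]; ring
      rw [this, abs_mul]
      calc |(if p.1 ∈ U then (1 : ℝ) else 0) - g p.1| * |χ p.2|
          ≤ D p.1 * 1 := mul_le_mul (hkey p.1) (hχabs p.2) (abs_nonneg _)
            (le_trans (abs_nonneg _) (hkey p.1))
        _ = D p.1 := mul_one _
    calc |∫ p, h p ∂ν - ∫ p, ψ p ∂ν| = |∫ p, (h p - ψ p) ∂ν| := by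
          rw [integral_sub hinth hintψ]
      _ ≤ ∫ p, |h p - ψ p| ∂ν := by
          simpa [Real.norm_eq_abs] using norm_integral_le_integral_norm (fun p => h p - ψ p) (μ := ν)
      _ ≤ ∫ p, D p.1 ∂ν := integral_mono (hinth.sub hintψ).abs hintD hptwise
      _ = ∫ x, D x ∂(ν.map Prod.fst) := by
          rw [integral_map hmfst.aemeasurable hDmeas.aestronglyMeasurable]
      _ = (P (O \ C)).toReal := by rw [hνm, hDdef, integral_indicator_one hODmeas]; rfl
  -- finish via weak convergence applied to ψ
  obtain ⟨N, hN⟩ := (Metric.tendsto_atTop.1 (hweak ψ hψc ⟨1, hψb⟩)) (ε / 2) (by positivity)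
  refine ⟨N, fun k hk => ?_⟩
  have hb1 := hbound (μseq k) inferInstance (hmarg k)
  have hb2 := hbound μ inferInstance hμmarg
  have hψk := hN k hk
  rw [Real.dist_eq] at hψk ⊢
  have htri : |∫ p, h p ∂(μseq k) - ∫ p, h p ∂μ|
      ≤ |∫ p, h p ∂(μseq k) - ∫ p, ψ p ∂(μseq k)|
        + |∫ p, ψ p ∂(μseq k) - ∫ p, ψ p ∂μ|
        + |∫ p, ψ p ∂μ - ∫ p, h p ∂μ| := by
    have := abs_sub_le (∫ p, h p ∂(μseq k)) (∫ p, ψ p ∂(μseq k)) (∫ p, h p ∂μ)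
    have h2 := abs_sub_le (∫ p, ψ p ∂(μseq k)) (∫ p, ψ p ∂μ) (∫ p, h p ∂μ)
    linarith
  have hb2' : |∫ p, ψ p ∂μ - ∫ p, h p ∂μ| ≤ (P (O \ C)).toReal := by
    rw [abs_sub_comm]; exact hb2
  calc |∫ p, h p ∂(μseq k) - ∫ p, h p ∂μ|
      ≤ |∫ p, h p ∂(μseq k) - ∫ p, ψ p ∂(μseq k)|
        + |∫ p, ψ p ∂(μseq k) - ∫ p, ψ p ∂μ|
        + |∫ p, ψ p ∂μ - ∫ p, h p ∂μ| := htri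
    _ < 2 * δ + ε / 2 + 2 * δ := by
        have := lt_of_le_of_lt hb1 hPOC
        have := lt_of_le_of_lt hb2' hPOC
        linarith
    _ ≤ ε := by rw [hδdef]; linarith
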